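/- Let κ be an infinite cardinal and let K be a totally disconnected compact Hausdorff space of weight at most κ such that every compact Hausdorff space of weight at most κ is a continuous image of K. Then every real Banach space of density character at most κ admits a linear isometric embedding into the Banach space C(K, ℝ) of continuous real-valued functions on K with the supremum norm. -/

import Mathlib

open Cardinal

/-- The weight of a topological space: the smallest cardinality of a base for its topology. -/
noncomputable def topWeight (X : Type u) [TopologicalSpace X] : Cardinal.{u} :=
  sInf { c | ∃ B : Set (Set X), TopologicalSpace.IsTopologicalBasis B ∧ #B = c }

/-- The density character of a topological space: the smallest cardinality of a dense subset. -/
noncomputable def densityChar (X : Type u) [TopologicalSpace X] : Cardinal.{u} :=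
  sInf { c | ∃ s : Set X, Dense s ∧ #s = c }

open TopologicalSpace Topology in
/-- If `L` embeds (as a topological space) into a product of copies of `ℝ` indexed by `ι`,
then the weight of `L` is at most `max #ι ℵ₀`. -/
lemma aux_topWeight_le {ι : Type u} {L : Type u} [TopologicalSpace L]
    (e : L → (ι → ℝ)) (he : IsInducing e) : topWeight L ≤ max #ι ℵ₀ := by
  classical
  set T : Set (Set ℝ) := ⋃ (a : ℚ) (b : ℚ) (_ : a < b), {Set.Ioo (a : ℝ) b} with hT
  set Bpi : Set (Set (ι → ℝ)) := { S | ∃ (U : ∀ _ : ι, Set ℝ) (F : Finset ι),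
      (∀ i, i ∈ F → U i ∈ T) ∧ S = (F : Set ι).pi U } with hBpi
  have hbasis : IsTopologicalBasis ((Set.preimage e) '' Bpi) :=
    (isTopologicalBasis_pi fun _ => Real.isTopologicalBasis_Ioo_rat).isInducing he
  have h1 : topWeight L ≤ #((Set.preimage e) '' Bpi) := csInf_le' ⟨_, hbasis, rfl⟩
  refine h1.trans (le_trans Cardinal.mk_image_le ?_)
  -- bound the cardinality of the pi basis
  set g : (Σ F : Finset ι, ({ x // x ∈ F } → ℚ × ℚ)) → Set (ι → ℝ) :=
    fun p => (↑p.1 : Set ι).pi (fun i =>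
      if h : i ∈ p.1 then Set.Ioo ((p.2 ⟨i, h⟩).1 : ℝ) ((p.2 ⟨i, h⟩).2 : ℝ) else Set.univ)
    with hg
  have hsub : Bpi ⊆ Set.range g := by
    rintro S ⟨U, F, hU, rfl⟩
    have hch : ∀ i : { x // x ∈ F }, ∃ ab : ℚ × ℚ,
        U i.1 = Set.Ioo ((ab.1 : ℝ)) ((ab.2 : ℝ)) := by
      rintro ⟨i, hi⟩
      have h := hU i hi
      simp only [hT, Set.mem_iUnion, Set.mem_singleton_iff] at h
      obtain ⟨a, b, _, h⟩ := h
      exact ⟨(a, b), h⟩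
    choose c hc using hch
    refine ⟨⟨F, c⟩, ?_⟩
    refine Set.pi_congr rfl fun i hi => ?_
    have hi' : i ∈ F := hi
    rw [dif_pos hi', ← hc ⟨i, hi'⟩]
  have h2 : #Bpi ≤ #(Σ F : Finset ι, ({ x // x ∈ F } → ℚ × ℚ)) :=
    (Cardinal.mk_le_mk_of_subset hsub).trans Cardinal.mk_range_le
  refine h2.trans ?_
  have h3 : #(Σ F : Finset ι, ({ x // x ∈ F } → ℚ × ℚ)) ≤ #(Finset ι) * ℵ₀ := by
    rw [Cardinal.mk_sigma]
    calc (Cardinal.sum fun F : Finset ι => #({ x // x ∈ F } → ℚ × ℚ))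
        ≤ Cardinal.sum fun _ : Finset ι => ℵ₀ :=
          Cardinal.sum_le_sum _ _ fun F => Cardinal.mk_le_aleph0
      _ = #(Finset ι) * ℵ₀ := Cardinal.sum_const' _ _
  refine h3.trans ?_
  have h4 : #(Finset ι) ≤ max #ι ℵ₀ := by
    cases finite_or_infinite ι with
    | inl h => exact Cardinal.mk_le_aleph0.trans (le_max_right _ _)
    | inr h => exact (Cardinal.mk_finset_of_infinite ι).le.trans (le_max_left _ _)
  calc #(Finset ι) * ℵ₀ ≤ max #ι ℵ₀ * max #ι ℵ₀ :=
        mul_le_mul' h4 (le_max_right _ _)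
    _ = max #ι ℵ₀ := Cardinal.mul_eq_self (le_max_right _ _)

/-- If `K` is a totally disconnected compact Hausdorff space of weight at most `κ` which maps
continuously onto every compact Hausdorff space of weight at most `κ`, then every real Banach
space of density character at most `κ` embeds linearly isometrically into `C(K, ℝ)`. -/
theorem stmt0 (κ : Cardinal.{u}) (hκ : ℵ₀ ≤ κ)
    (K : Type u) [TopologicalSpace K] [CompactSpace K] [T2Space K]
    [TotallyDisconnectedSpace K] (hK : topWeight K ≤ κ)
    (huniv : ∀ (L : Type u) [TopologicalSpace L] [CompactSpace L] [T2Space L],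
      topWeight L ≤ κ → ∃ f : K → L, Continuous f ∧ Function.Surjective f)
    (X : Type u) [NormedAddCommGroup X] [NormedSpace ℝ X] [CompleteSpace X]
    (hX : densityChar X ≤ κ) :
    Nonempty (X →ₗᵢ[ℝ] C(K, ℝ)) := by
  classical
  -- pick a dense set `s` of cardinality at most `κ`
  have hne : { c | ∃ s : Set X, Dense s ∧ #s = c }.Nonempty :=
    ⟨_, Set.univ, dense_univ, rfl⟩
  obtain ⟨s, hsd, hsc⟩ := csInf_mem hne
  have hsκ : #s ≤ κ := le_trans (le_of_eq hsc) hX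
  -- the dual unit ball with the weak-* topology
  set L : Set (WeakDual ℝ X) := WeakDual.toStrongDual ⁻¹' Metric.closedBall (0 : StrongDual ℝ X) 1 with hL
  have hLcompact : IsCompact L := WeakDual.isCompact_closedBall (𝕜 := ℝ) (E := X) (0 : StrongDual ℝ X) 1
  haveI : CompactSpace L := isCompact_iff_compactSpace.mp hLcompact
  -- the evaluation map into `s → ℝ` is inducing
  set e : L → (s → ℝ) := fun φ d => φ.1 d.1 with he
  have he_cont : Continuous e := continuous_pi fun d =>
    (WeakDual.eval_continuous (d.1 : X)).comp continuous_subtype_val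
  have he_inj : Function.Injective e := by
    rintro ⟨φ, hφ⟩ ⟨ψ, hψ⟩ h
    have h' : Set.EqOn (fun x : X => φ x) (fun x : X => ψ x) s := by
      intro d hd
      exact congrFun h ⟨d, hd⟩
    have cφ : Continuous fun x : X => φ x := (WeakDual.toStrongDual φ).continuous
    have cψ : Continuous fun x : X => ψ x := (WeakDual.toStrongDual ψ).continuous
    have hfun : (fun x : X => φ x) = fun x : X => ψ x :=
      Continuous.ext_on hsd cφ cψ h'
    exact Subtype.ext (DFunLike.coe_injective hfun)
  have he_ind : Topology.IsInducing e := (he_cont.isClosedEmbedding he_inj).isInducing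
  have hLw : topWeight L ≤ κ :=
    (aux_topWeight_le e he_ind).trans (max_le hsκ hκ)
  obtain ⟨f, hfc, hfs⟩ := huniv L hLw
  -- the embedding
  have hcont : ∀ x : X, Continuous fun k : K => (f k).1 x := fun x =>
    (WeakDual.eval_continuous x).comp (continuous_subtype_val.comp hfc)
  set T : X →ₗ[ℝ] C(K, ℝ) :=
    { toFun := fun x => ⟨fun k => (f k).1 x, hcont x⟩,
      map_add' := fun x y => ContinuousMap.ext fun k => map_add ((f k).1) x y,
      map_smul' := fun c x => ContinuousMap.ext fun k => map_smul ((f k).1) c x } with hTdef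
  refine ⟨⟨T, fun x => ?_⟩⟩
  apply le_antisymm
  · rw [ContinuousMap.norm_le _ (norm_nonneg x)]
    intro k
    calc ‖(f k).1 x‖ = ‖WeakDual.toStrongDual ((f k).1) x‖ := rfl
      _ ≤ ‖WeakDual.toStrongDual ((f k).1)‖ * ‖x‖ :=
          (WeakDual.toStrongDual ((f k).1)).le_opNorm x
      _ ≤ 1 * ‖x‖ := by
          gcongr
          exact mem_closedBall_zero_iff.mp (f k).2
      _ = ‖x‖ := one_mul _
  · rcases eq_or_ne x 0 with rfl | hx
    · simp
    obtain ⟨g, hg1, hgx⟩ := exists_dual_vector ℝ x (norm_ne_zero_iff.mpr hx)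
    have hgL : WeakDual.toStrongDual.symm g ∈ L := by
      simp only [hL, Set.mem_preimage, LinearEquiv.apply_symm_apply,
        mem_closedBall_zero_iff, hg1, le_refl]
    obtain ⟨k, hk⟩ := hfs ⟨_, hgL⟩
    have hval : (T x) k = ‖x‖ := by
      show (f k).1 x = ‖x‖
      rw [hk]
      exact hgx
    calc ‖x‖ = ‖(T x) k‖ := by rw [hval]; exact (Real.norm_of_nonneg (norm_nonneg x)).symm
      _ ≤ ‖T x‖ := (T x).norm_coe_le_norm k
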